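/- Every continuous real-valued function on a Suslin tree (with the order topology) has countable image. -/

import Mathlib

open Set Topology Cardinal Ordinal

universe u v

/-- The order (interval) topology of a tree. -/
def treeTopology (T : Type u) [PartialOrder T] : TopologicalSpace T :=
  TopologicalSpace.generateFrom
    ({s | ∃ a b : T, a < b ∧ s = Set.Ioc a b} ∪
     {s | ∃ b : T, (∀ a : T, ¬a < b) ∧ s = {b}})

/-- A tree order: the predecessors of every element are well-ordered. -/
def IsTreeOrder (T : Type u) [PartialOrder T] : Prop :=
  ∀ x : T, IsWellOrder {y : T // y < x} (· < ·)

/-- The height of an element: the order type of its set of predecessors. -/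
noncomputable def treeHeight {T : Type u} [PartialOrder T] (hT : IsTreeOrder T) (x : T) :
    Ordinal.{u} :=
  @Ordinal.type {y : T // y < x} (· < ·) (hT x)

/-- Hausdorff tree: elements at limit levels are determined by their predecessors. -/
def IsHausdorffTree (T : Type u) [PartialOrder T] : Prop :=
  ∀ x y : T, Set.Iio x = Set.Iio y → (Set.Iio x).Nonempty →
    (∀ z ∈ Set.Iio x, ∃ w ∈ Set.Iio x, z < w) → x = y

/-- The tree has height ω₁. -/
def HasHeightOmega1 {T : Type u} [PartialOrder T] (hT : IsTreeOrder T) : Prop :=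
  (∀ x : T, treeHeight hT x < ω₁) ∧ ∀ α < ω₁, ∃ x : T, treeHeight hT x = α

/-- Downward closure of a subset of a tree. -/
def downClosure {T : Type u} [PartialOrder T] (S : Set T) : Set T := {x | ∃ y ∈ S, x ≤ y}

/-- `D` is a closed discrete subset of the subspace `S`. -/
def ClosedDiscreteIn {T : Type u} [TopologicalSpace T] (D S : Set T) : Prop :=
  D ⊆ S ∧ closure D ∩ S ⊆ D ∧ ∀ x ∈ D, ∃ U : Set T, IsOpen U ∧ x ∈ U ∧ U ∩ D = {x}

/-- `S` is ω₁-compact in the subspace topology: every closed discrete subset is countable. -/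
def OmegaOneCompactIn {T : Type u} [TopologicalSpace T] (S : Set T) : Prop :=
  ∀ D : Set T, ClosedDiscreteIn D S → D.Countable

/-- A club (closed unbounded) subset of `ω₁` (as a set of ordinals, with the order topology). -/
def IsClubBelowOmega1 (C : Set Ordinal.{u}) : Prop :=
  C ⊆ Set.Iio ω₁ ∧ (∀ α < ω₁, ∃ β ∈ C, α ≤ β) ∧ ∀ α < ω₁, α ∈ closure C → α ∈ C

/-- A stationary subset of `ω₁`. -/
def IsStationaryBelowOmega1 (S : Set Ordinal.{u}) : Prop :=
  S ⊆ Set.Iio ω₁ ∧ ∀ C : Set Ordinal.{u}, IsClubBelowOmega1 C → (S ∩ C).Nonempty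

namespace SuslinAux

variable {T : Type u} [PartialOrder T]

theorem tri (hT : IsTreeOrder T) {x a b : T} (ha : a < x) (hb : b < x) :
    a < b ∨ a = b ∨ b < a := by
  haveI := hT x
  rcases trichotomous_of ((· < ·) : {y // y < x} → {y // y < x} → Prop) ⟨a, ha⟩ ⟨b, hb⟩ with
    h | h | h
  · exact Or.inl h
  · exact Or.inr (Or.inl (by simpa [Subtype.ext_iff] using h))
  · exact Or.inr (Or.inr h)

theorem le_or_le (hT : IsTreeOrder T) {x a b : T} (ha : a ≤ x) (hb : b ≤ x) :
    a ≤ b ∨ b ≤ a := by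
  rcases eq_or_lt_of_le ha with rfl | ha'
  · exact Or.inr hb
  rcases eq_or_lt_of_le hb with rfl | hb'
  · exact Or.inl ha
  rcases tri hT ha' hb' with h | h | h
  · exact Or.inl h.le
  · exact Or.inl h.le
  · exact Or.inr h.le

theorem ht_eq_typein (hT : IsTreeOrder T) {x y : T} (h : y < x) :
    treeHeight hT y = @Ordinal.typein {z // z < x} (· < ·) (hT x) ⟨y, h⟩ := by
  haveI := hT x; haveI := hT y
  rw [treeHeight, ← Ordinal.type_subrel]
  exact RelIso.ordinal_type_eq ⟨Equiv.mk
    (fun z => ⟨⟨z.1, z.2.trans h⟩, by exact z.2⟩)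
    (fun b => ⟨b.1.1, by exact b.2⟩) (fun z => rfl) (fun b => rfl),
    fun {z w} => Iff.rfl⟩

theorem ht_lt_ht (hT : IsTreeOrder T) {x y : T} (h : y < x) :
    treeHeight hT y < treeHeight hT x := by
  haveI := hT x
  rw [ht_eq_typein hT h]
  exact Ordinal.typein_lt_type _ _

theorem ht_le_ht (hT : IsTreeOrder T) {x y : T} (h : y ≤ x) :
    treeHeight hT y ≤ treeHeight hT x := by
  rcases eq_or_lt_of_le h with rfl | h'
  · exact le_rfl
  · exact (ht_lt_ht hT h').le

theorem lt_of_comp_ht_lt (hT : IsTreeOrder T) {a z : T}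
    (hc : a ≤ z ∨ z ≤ a) (hh : treeHeight hT a < treeHeight hT z) : a < z := by
  rcases hc with h | h
  · rcases eq_or_lt_of_le h with rfl | h'
    · exact absurd hh (lt_irrefl _)
    · exact h'
  · exact absurd (ht_le_ht hT h) (not_le.2 hh)

theorem exists_le_ht_eq (hT : IsTreeOrder T) {x : T} {δ : Ordinal.{u}}
    (h : δ ≤ treeHeight hT x) : ∃ y, y ≤ x ∧ treeHeight hT y = δ := by
  rcases eq_or_lt_of_le h with rfl | h'
  · exact ⟨x, le_rfl, rfl⟩
  · haveI := hT x
    obtain ⟨⟨y, hy⟩, hy2⟩ := Ordinal.typein_surj ((· < ·) : {y // y < x} → {y // y < x} → Prop) h'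
    exact ⟨y, hy.le, (ht_eq_typein hT hy).trans hy2⟩

theorem level_countable (hT : IsTreeOrder T)
    (hantichain : ∀ A : Set T, IsAntichain (· ≤ ·) A → A.Countable) (β : Ordinal.{u}) :
    {x : T | treeHeight hT x = β}.Countable := by
  apply hantichain
  intro x hx y hy hxy hle
  have hlt : x < y := lt_of_le_of_ne hle hxy
  have := ht_lt_ht hT hlt
  rw [hx, hy] at this
  exact absurd this (lt_irrefl β)

theorem countable_ht_lt (hT : IsTreeOrder T)
    (hantichain : ∀ A : Set T, IsAntichain (· ≤ ·) A → A.Countable) {δ : Ordinal.{u}}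
    (hδ : δ < ω₁) : {x : T | treeHeight hT x < δ}.Countable := by
  have hsub : {x : T | treeHeight hT x < δ} ⊆ ⋃ β ∈ Set.Iio δ, {x : T | treeHeight hT x = β} :=
    fun x hx => Set.mem_biUnion hx rfl
  have hIio : (Set.Iio δ).Countable := by
    rw [Cardinal.countable_iff_lt_aleph_one, Ordinal.mk_Iio_ordinal]
    have hc : δ.card < ℵ₁ := by rwa [← Cardinal.lt_ord, Cardinal.ord_aleph]
    have := Cardinal.lift_lt.{u, u+1}.2 hc
    simpa [Cardinal.lift_aleph] using this
  exact Set.Countable.mono hsub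
    (Set.Countable.biUnion hIio fun β _ => level_countable hT hantichain β)

theorem bound_lemma (hT : IsTreeOrder T) (hht : ∀ x : T, treeHeight hT x < ω₁)
    {A : Set T} (hA : A.Countable) :
    ∃ γ : Ordinal.{u}, γ < ω₁ ∧ ∀ a ∈ A, treeHeight hT a < γ := by
  haveI := hA.to_subtype
  rcases isEmpty_or_nonempty A with hA0 | hA1
  · exact ⟨1, Ordinal.one_lt_omega0.trans omega0_lt_omega_one,
      fun a ha => (hA0.false ⟨a, ha⟩).elim⟩
  · set o : ↥A → Ordinal.{u} := fun a => treeHeight hT a.1 + 1 with ho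
    have h1 : ∀ a : ↥A, o a < ω₁ := by
      intro a
      have := hht a.1
      show treeHeight hT a.1 + 1 < ω₁
      rw [Ordinal.add_one_eq_succ]
      exact (Cardinal.isSuccLimit_omega 1).succ_lt this
    have h2 : iSup o < ω₁ := by
      have := Ordinal.iSup_lt_omega_one (f := o)
        (by simpa [Cardinal.ord_aleph] using h1)
      simpa [Cardinal.ord_aleph] using this
    refine ⟨iSup o, h2, fun a ha => ?_⟩
    have : o ⟨a, ha⟩ ≤ iSup o := Ordinal.le_iSup o ⟨a, ha⟩
    have hlt : treeHeight hT a < o ⟨a, ha⟩ := by simp [ho]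
    exact hlt.trans_le this

/-- Maximal antichain inside a "dense" set of nodes. -/
theorem exists_maximal_antichain (hT : IsTreeOrder T) (P : Set T)
    (hP : ∀ t, ∃ p, t ≤ p ∧ p ∈ P) :
    ∃ A, A ⊆ P ∧ IsAntichain (· ≤ ·) A ∧ ∀ t, ∃ a ∈ A, a ≤ t ∨ t ≤ a := by
  classical
  have hchains : ∀ c ⊆ {A : Set T | A ⊆ P ∧ IsAntichain (· ≤ ·) A},
      IsChain (· ⊆ ·) c → ∃ ub ∈ {A : Set T | A ⊆ P ∧ IsAntichain (· ≤ ·) A},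
        ∀ s ∈ c, s ⊆ ub := by
    intro c hcS hchain
    refine ⟨⋃₀ c, ⟨?_, ?_⟩, fun s hs => subset_sUnion_of_mem hs⟩
    · exact sUnion_subset fun A hA => (hcS hA).1
    · intro a ha b hb hab hle
      obtain ⟨A, hA, haA⟩ := ha
      obtain ⟨B, hB, hbB⟩ := hb
      rcases hchain.total hA hB with h | h
      · exact (hcS hB).2 (h haA) hbB hab hle
      · exact (hcS hA).2 haA (h hbB) hab hle
  obtain ⟨M, hM⟩ := zorn_subset {A : Set T | A ⊆ P ∧ IsAntichain (· ≤ ·) A} hchains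
  obtain ⟨hMP, hManti⟩ := hM.1
  refine ⟨M, hMP, hManti, fun t => ?_⟩
  obtain ⟨p, htp, hpP⟩ := hP t
  have hcomp : ∃ a ∈ M, a ≤ p ∨ p ≤ a := by
    by_cases hpM : p ∈ M
    · exact ⟨p, hpM, Or.inl le_rfl⟩
    by_contra hc
    push_neg at hc
    have hmem : insert p M ∈ {A : Set T | A ⊆ P ∧ IsAntichain (· ≤ ·) A} := by
      constructor
      · exact insert_subset hpP hMP
      · intro a ha b hb hab hle
        rcases ha with rfl | ha
        · rcases hb with rfl | hb
          · exact hab rfl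
          · exact (hc b hb).2 hle
        · rcases hb with rfl | hb
          · exact (hc a ha).1 hle
          · exact hManti ha hb hab hle
    have := hM.2 hmem (subset_insert p M)
    exact hpM (this (mem_insert p M))
  obtain ⟨a, haM, hap⟩ := hcomp
  rcases hap with hap | hpa
  · rcases le_or_le hT hap htp with h | h
    · exact ⟨a, haM, Or.inl h⟩
    · exact ⟨a, haM, Or.inr h⟩
  · exact ⟨a, haM, Or.inr (htp.trans hpa)⟩

/-- Neighborhood base at non-minimal points. -/
theorem nbhd_base (hT : IsTreeOrder T) {U : Set T} (hU : IsOpen[treeTopology T] U)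
    {z : T} (hz : z ∈ U) (hmin : ∃ w, w < z) : ∃ c, c < z ∧ Set.Ioc c z ⊆ U := by
  induction hU with
  | basic s hs =>
    rcases hs with ⟨a, b, hab, rfl⟩ | ⟨b, hb, rfl⟩
    · obtain ⟨haz, hzb⟩ := hz
      exact ⟨a, haz, fun y hy => ⟨hy.1, hy.2.trans hzb⟩⟩
    · obtain ⟨w, hw⟩ := hmin
      rw [mem_singleton_iff] at hz
      exact absurd (hz ▸ hw) (hb w)
  | univ => obtain ⟨w, hw⟩ := hmin; exact ⟨w, hw, fun y _ => mem_univ y⟩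
  | inter s t hs ht ihs iht =>
    obtain ⟨c₁, hc₁, hs1⟩ := ihs hz.1
    obtain ⟨c₂, hc₂, hs2⟩ := iht hz.2
    rcases le_or_le hT hc₁.le hc₂.le with h | h
    · exact ⟨c₂, hc₂, fun y hy => ⟨hs1 ⟨lt_of_le_of_lt h hy.1, hy.2⟩, hs2 hy⟩⟩
    · exact ⟨c₁, hc₁, fun y hy => ⟨hs1 hy, hs2 ⟨lt_of_le_of_lt h hy.1, hy.2⟩⟩⟩
  | sUnion S hS ih =>
    obtain ⟨s, hsS, hzs⟩ := hz
    obtain ⟨c, hc, hsub⟩ := ih s hsS hzs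
    exact ⟨c, hc, fun y hy => ⟨s, hsS, hsub hy⟩⟩

/-- The key lemma: the set of nodes above which `f` oscillates by more than `ε` is countable. -/
theorem key (hT : IsTreeOrder T) (hht : ∀ x : T, treeHeight hT x < ω₁)
    (hantichain : ∀ A : Set T, IsAntichain (· ≤ ·) A → A.Countable)
    (f : T → ℝ) (hf : @Continuous T ℝ (treeTopology T) _ f) {ε : ℝ} (hε : 0 < ε) :
    {x : T | ∃ u v, x ≤ u ∧ x ≤ v ∧ ε < f u - f v}.Countable := by
  classical
  letI : TopologicalSpace T := treeTopology T
  by_contra hunc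
  -- maximal antichains for "f-value > q at height > β" and "f-value < q at height > β"
  have hApx : ∀ (q : ℚ) (β : Ordinal.{u}), ∃ A : Set T,
      (A ⊆ {t | (β < treeHeight hT t ∧ (q:ℝ) < f t) ∨
        (∀ s, t ≤ s → β < treeHeight hT s → f s ≤ q)}) ∧
      IsAntichain (· ≤ ·) A ∧ ∀ t, ∃ a ∈ A, a ≤ t ∨ t ≤ a := by
    intro q β
    apply exists_maximal_antichain hT
    intro t
    by_cases h : ∃ s, t ≤ s ∧ β < treeHeight hT s ∧ (q:ℝ) < f s
    · obtain ⟨s, h1, h2, h3⟩ := h; exact ⟨s, h1, Or.inl ⟨h2, h3⟩⟩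
    · push_neg at h
      exact ⟨t, le_rfl, Or.inr (fun s hs hb => h s hs hb)⟩
  have hAmx : ∀ (q : ℚ) (β : Ordinal.{u}), ∃ A : Set T,
      (A ⊆ {t | (β < treeHeight hT t ∧ f t < (q:ℝ)) ∨
        (∀ s, t ≤ s → β < treeHeight hT s → (q:ℝ) ≤ f s)}) ∧
      IsAntichain (· ≤ ·) A ∧ ∀ t, ∃ a ∈ A, a ≤ t ∨ t ≤ a := by
    intro q β
    apply exists_maximal_antichain hT
    intro t
    by_cases h : ∃ s, t ≤ s ∧ β < treeHeight hT s ∧ f s < (q:ℝ)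
    · obtain ⟨s, h1, h2, h3⟩ := h; exact ⟨s, h1, Or.inl ⟨h2, h3⟩⟩
    · push_neg at h
      exact ⟨t, le_rfl, Or.inr (fun s hs hb => h s hs hb)⟩
  choose Ap hApP hApAnti hApMax using hApx
  choose Am hAmP hAmAnti hAmMax using hAmx
  -- closing-off function
  have hbound : ∀ β : Ordinal.{u}, ∃ γ : Ordinal.{u}, γ < ω₁ ∧
      ∀ a ∈ (⋃ q : ℚ, (Ap q β ∪ Am q β)), treeHeight hT a < γ := by
    intro β
    apply bound_lemma hT hht
    exact Set.countable_iUnion fun q =>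
      ((hantichain _ (hApAnti q β)).union (hantichain _ (hAmAnti q β)))
  choose γfun hγ1 hγ2 using hbound
  -- iterate ω times
  set g : ℕ → Ordinal.{u} := fun k => Nat.rec 0 (fun _ o => max (γfun o) (o + 1)) k with hg
  have hgsucc : ∀ k, g (k + 1) = max (γfun (g k)) (g k + 1) := fun k => rfl
  have hglt : ∀ k, g k < ω₁ := by
    intro k; induction k with
    | zero => exact omega_pos 1
    | succ k ih =>
      rw [hgsucc]
      refine max_lt (hγ1 _) ?_
      rw [Ordinal.add_one_eq_succ]
      exact (Cardinal.isSuccLimit_omega 1).succ_lt ih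
  have hgmono : ∀ k, g k < g (k + 1) := by
    intro k
    rw [hgsucc]
    exact lt_of_lt_of_le (Order.lt_succ_of_le (le_refl (g k)) |>.trans_eq
      (Ordinal.add_one_eq_succ (g k)).symm) (le_max_right _ _)
  set δ : Ordinal.{u} := iSup g with hδ
  have hδω : δ < ω₁ := by
    have := Ordinal.iSup_lt_omega_one (f := g)
      (by simpa [Cardinal.ord_aleph] using hglt)
    simpa [Cardinal.ord_aleph] using this
  have hgleδ : ∀ k, g k ≤ δ := fun k => Ordinal.le_iSup g k
  have hδpos : 0 < δ := lt_of_lt_of_le (by simpa [hg] using hgmono 0) (hgleδ 1)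
  -- a node z in our set at height exactly δ
  have hz0 : ∃ z₀, z₀ ∈ {x : T | ∃ u v, x ≤ u ∧ x ≤ v ∧ ε < f u - f v} ∧
      δ ≤ treeHeight hT z₀ := by
    by_contra h; push_neg at h
    exact hunc (Set.Countable.mono (fun x hx => h x hx) (countable_ht_lt hT hantichain hδω))
  obtain ⟨z₀, hz₀B, hz₀h⟩ := hz0
  obtain ⟨z, hzz₀, hzδ⟩ := exists_le_ht_eq hT hz₀h
  obtain ⟨uu, vv, hu, hv, huv⟩ := hz₀B
  have hzu : z ≤ uu := hzz₀.trans hu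
  have hzv : z ≤ vv := hzz₀.trans hv
  -- rationals
  obtain ⟨q₁, hq₁l, hq₁r⟩ := exists_rat_btwn (show f vv < f vv + ε/4 by linarith)
  obtain ⟨q₂, hq₂l, hq₂r⟩ := exists_rat_btwn (show f uu - ε/4 < f uu by linarith)
  have hq21 : ε/2 < (q₂:ℝ) - q₁ := by linarith
  -- continuity at z
  have hUopen : IsOpen[treeTopology T] (f ⁻¹' Metric.ball (f z) (ε/8)) :=
    hf.isOpen_preimage _ Metric.isOpen_ball
  have hzU : z ∈ f ⁻¹' Metric.ball (f z) (ε/8) := by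
    simp only [Set.mem_preimage, Metric.mem_ball, dist_self]
    linarith
  have hminz : ∃ w, w < z := by
    by_contra h; push_neg at h
    have h0 : treeHeight hT z = 0 := by
      haveI := hT z
      rw [treeHeight, Ordinal.type_eq_zero_iff_isEmpty]
      exact ⟨fun y => (h y.1 y.2).elim⟩
    rw [hzδ] at h0
    exact absurd h0.symm (ne_of_lt hδpos)
  obtain ⟨c, hcz, hcU⟩ := nbhd_base hT hUopen hzU hminz
  -- find a level g k above the height of c
  have hck : ∃ k, treeHeight hT c < g k := by
    by_contra h; push_neg at h
    have h1 : δ ≤ treeHeight hT c := Ordinal.iSup_le h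
    have h2 : treeHeight hT c < δ := hzδ ▸ ht_lt_ht hT hcz
    exact absurd h2 (not_lt.2 h1)
  obtain ⟨k, hk⟩ := hck
  have hβδ : g k < δ := lt_of_lt_of_le (hgmono k) (hgleδ (k + 1))
  -- point a below z with f-value > q₂
  obtain ⟨a, haA, hacomp⟩ := hApMax q₂ (g k) z
  have haht : treeHeight hT a < δ := by
    refine lt_of_lt_of_le (hγ2 (g k) a ?_) ?_
    · exact Set.mem_iUnion.2 ⟨q₂, Set.mem_union_left _ haA⟩
    · exact le_trans (le_max_left _ _) ((hgsucc k ▸ hgleδ (k + 1)))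
  have haz : a < z := lt_of_comp_ht_lt hT hacomp (hzδ ▸ haht)
  have hafirst : g k < treeHeight hT a ∧ (q₂:ℝ) < f a := by
    rcases hApP q₂ (g k) haA with h | h
    · exact h
    · exfalso
      have hhu : g k < treeHeight hT uu :=
        lt_of_lt_of_le hβδ (hzδ ▸ ht_le_ht hT hzu)
      have := h uu (haz.le.trans hzu) hhu
      linarith
  have hca : c < a := lt_of_comp_ht_lt hT (le_or_le hT hcz.le haz.le) (hk.trans hafirst.1)
  have haU : f a ∈ Metric.ball (f z) (ε/8) := hcU ⟨hca, haz.le⟩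
  -- point b below z with f-value < q₁
  obtain ⟨b, hbA, hbcomp⟩ := hAmMax q₁ (g k) z
  have hbht : treeHeight hT b < δ := by
    refine lt_of_lt_of_le (hγ2 (g k) b ?_) ?_
    · exact Set.mem_iUnion.2 ⟨q₁, Set.mem_union_right _ hbA⟩
    · exact le_trans (le_max_left _ _) ((hgsucc k ▸ hgleδ (k + 1)))
  have hbz : b < z := lt_of_comp_ht_lt hT hbcomp (hzδ ▸ hbht)
  have hbfirst : g k < treeHeight hT b ∧ f b < (q₁:ℝ) := by
    rcases hAmP q₁ (g k) hbA with h | h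
    · exact h
    · exfalso
      have hhv : g k < treeHeight hT vv :=
        lt_of_lt_of_le hβδ (hzδ ▸ ht_le_ht hT hzv)
      have := h vv (hbz.le.trans hzv) hhv
      linarith
  have hcb : c < b := lt_of_comp_ht_lt hT (le_or_le hT hcz.le hbz.le) (hk.trans hbfirst.1)
  have hbU : f b ∈ Metric.ball (f z) (ε/8) := hcU ⟨hcb, hbz.le⟩
  -- contradiction
  rw [Metric.mem_ball, Real.dist_eq] at haU hbU
  have h1 : f a - f z < ε/8 := lt_of_le_of_lt (le_abs_self _) haU
  have h2 : f z - f b < ε/8 := by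
    have := lt_of_le_of_lt (neg_abs_le _) hbU
    linarith [abs_le.1 hbU.le]
  have := hafirst.2
  have := hbfirst.2
  linarith

end SuslinAux

/-- Every continuous real-valued function on a (Hausdorff) Suslin tree, with
the order topology, has countable image. A Suslin tree is a tree of height ω₁ all of whose
chains and antichains are countable. -/
theorem countable_image_of_continuous_on_suslin {T : Type u} [PartialOrder T]
    [tT : TopologicalSpace T] (htop : tT = treeTopology T)
    (hT : IsTreeOrder T) (hH : IsHausdorffTree T) (hht : HasHeightOmega1 hT)
    (hchain : ∀ c : Set T, IsChain (· ≤ ·) c → c.Countable)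
    (hantichain : ∀ A : Set T, IsAntichain (· ≤ ·) A → A.Countable)
    (f : T → ℝ) (hf : Continuous f) :
    (Set.range f).Countable := by
  classical
  subst htop
  open SuslinAux in
  -- the set of nodes above which f is constant
  set R : Set T := {x | ∀ u v, x ≤ u → x ≤ v → f u = f v} with hR
  set Rmin : Set T := {x | x ∈ R ∧ ∀ y, y < x → y ∉ R} with hRmin
  have hRminAnti : IsAntichain (· ≤ ·) Rmin := by
    intro x hx y hy hxy hle
    exact hy.2 x (lt_of_le_of_ne hle hxy) hx.1
  have hRminCount := hantichain _ hRminAnti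
  have hfR : ∀ x ∈ R, ∃ m ∈ Rmin, f x = f m := by
    intro x hx
    by_cases hS : ∃ y : {z : T // z < x}, y.1 ∈ R
    · haveI := hT x
      have wf : WellFounded ((· < ·) : {z : T // z < x} → {z : T // z < x} → Prop) :=
        IsWellFounded.wf
      set S : Set {z : T // z < x} := {y | y.1 ∈ R} with hSdef
      have hSne : S.Nonempty := hS
      set m : {z : T // z < x} := wf.min S hSne with hm
      have hmR : m.1 ∈ R := wf.min_mem S hSne
      have hmmin : ∀ w, w < m.1 → w ∉ R := by
        intro w hw hwR
        have hwx : w < x := hw.trans m.2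
        exact wf.not_lt_min S (show (⟨w, hwx⟩ : {z : T // z < x}) ∈ S from hwR) hw
      refine ⟨m.1, ⟨hmR, hmmin⟩, ?_⟩
      exact hmR x m.1 m.2.le le_rfl
    · push_neg at hS
      exact ⟨x, ⟨hx, fun y hy => hS ⟨y, hy⟩⟩, rfl⟩
  have hRimg : (f '' R).Countable := by
    refine Set.Countable.mono ?_ (hRminCount.image f)
    rintro _ ⟨x, hx, rfl⟩
    obtain ⟨m, hm, he⟩ := hfR x hx
    exact ⟨m, hm, he.symm⟩
  -- the oscillation sets
  set B : ℕ → Set T := fun n => {x : T | ∃ u v, x ≤ u ∧ x ≤ v ∧ 1/((n:ℝ)+1) < f u - f v}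
    with hB
  have hBc : ∀ n : ℕ, (B n).Countable := by
    intro n
    exact key hT hht.1 hantichain f hf (by positivity)
  have hcover : Set.range f ⊆ f '' R ∪ ⋃ n : ℕ, f '' (B n) := by
    rintro _ ⟨x, rfl⟩
    by_cases hx : x ∈ R
    · exact Or.inl ⟨x, hx, rfl⟩
    · right
      simp only [hR, Set.mem_setOf_eq] at hx
      push_neg at hx
      obtain ⟨u, v, hu, hv, hne⟩ := hx
      rcases lt_or_gt_of_ne hne with h | h
      · obtain ⟨n, hn⟩ := exists_nat_one_div_lt (sub_pos.2 h)
        exact Set.mem_iUnion.2 ⟨n, ⟨x, ⟨v, u, hv, hu, hn⟩, rfl⟩⟩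
      · obtain ⟨n, hn⟩ := exists_nat_one_div_lt (sub_pos.2 h)
        exact Set.mem_iUnion.2 ⟨n, ⟨x, ⟨u, v, hu, hv, hn⟩, rfl⟩⟩
  exact Set.Countable.mono hcover
    (hRimg.union (Set.countable_iUnion fun n => ((hBc n).image f)))
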